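/- Fix K ≥ t ≥ 1 and set F = C(K,t). Define an F × K array P indexed by (τ, j) with τ a t-subset of [K] and j ∈ [K], where p_{τ,j} = τ ∪ {j} (viewed as an element of the set of (t+1)-subsets of [K]) if j ∉ τ, and p_{τ,j} = * if j ∈ τ. Then P is a (t+1)-regular [K, C(K,t), C(K−1,t−1), C(K,t+1)]-PDA: each column contains exactly C(K−1,t−1) stars, each (t+1)-subset appears exactly t+1 times as an entry, and whenever p_{τ1,j1} = p_{τ2,j2} is a non-star entry with (τ1,j1) ≠ (τ2,j2), we have τ1 ≠ τ2, j1 ≠ j2, and p_{τ1,j2} = p_{τ2,j1} = *. -/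

import Mathlib

/-- The MAN array (rows = t-subsets τ of [K], columns = j ∈ [K],
entry τ ∪ {j} if j ∉ τ, star if j ∈ τ) is a (t+1)-regular
[K, C(K,t), C(K−1,t−1), C(K,t+1)]-PDA: each column has exactly C(K−1,t−1)
stars, each (t+1)-subset occurs exactly t+1 times as an entry, and equal
non-star entries satisfy the PDA cross condition. -/
theorem man_pda (K t : ℕ) (ht : 1 ≤ t) (htK : t ≤ K) :
    (∀ j : Fin K,
      (Finset.univ.filter (fun τ : Finset (Fin K) => τ.card = t ∧ j ∈ τ)).card
        = (K - 1).choose (t - 1)) ∧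
    (∀ S : Finset (Fin K), S.card = t + 1 →
      (Finset.univ.filter (fun p : Finset (Fin K) × Fin K =>
        p.1.card = t ∧ p.2 ∉ p.1 ∧ insert p.2 p.1 = S)).card = t + 1) ∧
    (∀ τ₁ τ₂ : Finset (Fin K), ∀ j₁ j₂ : Fin K,
      τ₁.card = t → τ₂.card = t → j₁ ∉ τ₁ → j₂ ∉ τ₂ →
      insert j₁ τ₁ = insert j₂ τ₂ → (τ₁, j₁) ≠ (τ₂, j₂) →
      τ₁ ≠ τ₂ ∧ j₁ ≠ j₂ ∧ j₂ ∈ τ₁ ∧ j₁ ∈ τ₂) := by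
  refine ⟨?_, ?_, ?_⟩
  · intro j
    have hK : 1 ≤ K := le_trans ht htK
    rw [show (K - 1).choose (t - 1)
        = ((Finset.univ.erase j : Finset (Fin K)).powersetCard (t - 1)).card by
      rw [Finset.card_powersetCard, Finset.card_erase_of_mem (Finset.mem_univ j),
        Finset.card_univ, Fintype.card_fin]]
    refine Finset.card_nbij' (fun τ => τ.erase j) (fun σ => insert j σ) ?_ ?_ ?_ ?_
    · intro τ hτ
      simp only [Finset.mem_coe, Finset.mem_filter, Finset.mem_univ, true_and] at hτ
      rw [Finset.mem_coe, Finset.mem_powersetCard]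
      constructor
      · intro x hx
        simp only [Finset.mem_erase] at hx ⊢
        exact ⟨hx.1, Finset.mem_univ x⟩
      · rw [Finset.card_erase_of_mem hτ.2, hτ.1]
    · intro σ hσ
      rw [Finset.mem_coe, Finset.mem_powersetCard] at hσ
      simp only [Finset.mem_coe, Finset.mem_filter, Finset.mem_univ, true_and]
      have hjσ : j ∉ σ := fun h => by
        have := hσ.1 h; simp at this
      constructor
      · rw [Finset.card_insert_of_notMem hjσ, hσ.2]
        omega
      · exact Finset.mem_insert_self j σ
    · intro τ hτ
      simp only [Finset.mem_coe, Finset.mem_filter, Finset.mem_univ, true_and] at hτ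
      exact Finset.insert_erase hτ.2
    · intro σ hσ
      rw [Finset.mem_coe, Finset.mem_powersetCard] at hσ
      have hjσ : j ∉ σ := fun h => by
        have := hσ.1 h; simp at this
      exact Finset.erase_insert hjσ
  · intro S hS
    rw [show t + 1 = S.card from hS.symm]
    refine Finset.card_nbij' (fun p => p.2) (fun j => (S.erase j, j)) ?_ ?_ ?_ ?_
    · intro p hp
      simp only [Finset.mem_coe, Finset.mem_filter, Finset.mem_univ, true_and] at hp
      rw [← hp.2.2]
      exact Finset.mem_insert_self _ _
    · intro j hj
      simp only [Finset.mem_coe, Finset.mem_filter, Finset.mem_univ, true_and]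
      refine ⟨?_, Finset.notMem_erase j S, Finset.insert_erase hj⟩
      rw [Finset.card_erase_of_mem hj, hS]
      omega
    · intro p hp
      simp only [Finset.mem_coe, Finset.mem_filter, Finset.mem_univ, true_and] at hp
      obtain ⟨h1, h2, h3⟩ := hp
      have h4 : S.erase p.2 = p.1 := by
        rw [← h3, Finset.erase_insert h2]
      simp only [h4]
    · intro j hj
      rfl
  · intro τ₁ τ₂ j₁ j₂ h1 h2 hj1 hj2 hins hne
    have hjj : j₁ ≠ j₂ := by
      intro h
      subst h
      apply hne
      have : τ₁ = τ₂ := by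
        have := congrArg (·.erase j₁) hins
        simpa [Finset.erase_insert hj1, Finset.erase_insert hj2] using this
      rw [this]
    have hj2τ1 : j₂ ∈ τ₁ := by
      have : j₂ ∈ insert j₁ τ₁ := by rw [hins]; exact Finset.mem_insert_self _ _
      rcases Finset.mem_insert.mp this with h | h
      · exact absurd h.symm hjj
      · exact h
    have hj1τ2 : j₁ ∈ τ₂ := by
      have : j₁ ∈ insert j₂ τ₂ := by rw [← hins]; exact Finset.mem_insert_self _ _
      rcases Finset.mem_insert.mp this with h | h
      · exact absurd h hjj
      · exact h
    exact ⟨fun h => hj1 (h ▸ hj1τ2), hjj, hj2τ1, hj1τ2⟩
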